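/- Let l, u be real numbers with l < 0 < u, and let a, b be arbitrary real numbers. Then there exists x with l ≤ x ≤ u such that |ReLU(x) − (a·x + b)| ≥ (−l·u)/(2(u − l)). Consequently, the linear function ℓ_m minimizes the maximum error among all linear approximations of ReLU on [l,u], and the minimal possible maximum error equals (−l·u)/(2(u − l)). -/

import Mathlib

theorem relu_linear_approx_max_error_lower_bound
    (l u : ℝ) (hl : l < 0) (hu : 0 < u) (a b : ℝ) :
    ∃ x : ℝ, l ≤ x ∧ x ≤ u ∧
      |max x 0 - (a * x + b)| ≥ (-l * u) / (2 * (u - l)) := by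
  by_contra h
  push_neg at h
  have hlu : l < u := hl.trans hu
  have h1 := h l le_rfl hlu.le
  have h2 := h 0 hl.le hu.le
  have h3 := h u hlu.le le_rfl
  rw [max_eq_right hl.le] at h1
  rw [max_self] at h2
  rw [max_eq_left hu.le] at h3
  rw [abs_lt] at h1 h2 h3
  have hd : (0:ℝ) < 2 * (u - l) := by linarith
  have key : (-l * u) = 2 * (u - l) * ((-l * u) / (2 * (u - l))) := by
    rw [mul_div_assoc', eq_div_iff hd.ne']
    ring
  set e := (-l * u) / (2 * (u - l)) with he
  nlinarith [mul_lt_mul_of_pos_left h1.2 hu, mul_lt_mul_of_pos_left h3.2 (neg_pos.mpr hl),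
    mul_lt_mul_of_pos_left h2.1 (sub_pos.mpr hlu)]
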